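/- Suppose W ∈ ℝ^{m×d} is a random matrix whose entries are i.i.d. uniform on {−1,+1}, c = 1 ∈ ℝ^m is the all-ones vector, x̄ = 0, and ε = 1. Then there exists a universal constant γ such that with probability at least 1 − exp(−(d+m)), the SDP relaxation value satisfies f_SDP ≤ γ(m√d + d√m), while the LP relaxation value satisfies f_LP ≥ md/2 almost surely. In particular f_LP/f_SDP = Ω(min(√d, √m)). -/

import Mathlib

open MeasureTheory

/-- LP relaxation feasibility for `z = ReLU(W x)` over `‖x‖_∞ ≤ 1` (i.e. `x̄ = 0`,
`ε = 1`), with the convex outer envelope of each ReLU using the interval-arithmetic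
pre-activation bounds `s_i = −‖W_i‖₁`, `t_i = ‖W_i‖₁`. -/
def LPFeasible {m d : ℕ} (W : Matrix (Fin m) (Fin d) ℝ)
    (x : Fin d → ℝ) (z : Fin m → ℝ) : Prop :=
  (∀ i, 0 ≤ z i) ∧
  (∀ i, (W.mulVec x) i ≤ z i) ∧
  (∀ i,
    let s : ℝ := -∑ j, |W i j|
    let t : ℝ := ∑ j, |W i j|
    z i ≤ (max t 0 - max s 0) / (t - s) * ((W.mulVec x) i - s) + max s 0) ∧
  (∀ j, |x j| ≤ 1)

/-- LP relaxation value with objective vector `c = 𝟏`. -/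
noncomputable def fLP {m d : ℕ} (W : Matrix (Fin m) (Fin d) ℝ) : ℝ :=
  sSup {v : ℝ | ∃ x z, LPFeasible W x z ∧ v = ∑ i, z i}

/-- SDP relaxation feasibility for `z = ReLU(W x)` over `‖x‖_∞ ≤ 1`: a PSD moment
matrix `P` indexed by `{1, x₁,…,x_d, z₁,…,z_m}` with `P[1] = 1`, `P[z] ≥ 0`,
`P[z] ≥ W P[x]`, `P[z_i²] = W_iᵀ P[x z_i]` and `P[x_j²] ≤ 1`. -/
def SDPFeasible {m d : ℕ} (W : Matrix (Fin m) (Fin d) ℝ)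
    (P : Matrix (Unit ⊕ Fin d ⊕ Fin m) (Unit ⊕ Fin d ⊕ Fin m) ℝ) : Prop :=
  P.PosSemidef ∧
  P (Sum.inl ()) (Sum.inl ()) = 1 ∧
  (∀ i, 0 ≤ P (Sum.inl ()) (Sum.inr (Sum.inr i))) ∧
  (∀ i, ∑ j, W i j * P (Sum.inl ()) (Sum.inr (Sum.inl j)) ≤
    P (Sum.inl ()) (Sum.inr (Sum.inr i))) ∧
  (∀ i, P (Sum.inr (Sum.inr i)) (Sum.inr (Sum.inr i)) =
    ∑ j, W i j * P (Sum.inr (Sum.inl j)) (Sum.inr (Sum.inr i))) ∧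
  (∀ j, P (Sum.inr (Sum.inl j)) (Sum.inr (Sum.inl j)) ≤ 1)

/-- SDP relaxation value with objective vector `c = 𝟏`. -/
noncomputable def fSDP {m d : ℕ} (W : Matrix (Fin m) (Fin d) ℝ) : ℝ :=
  sSup {v : ℝ | ∃ P, SDPFeasible W P ∧
    v = ∑ i, P (Sum.inl ()) (Sum.inr (Sum.inr i))}

/-- The uniform distribution on `{−1, +1} ⊆ ℝ`. -/
noncomputable def signMeasure : Measure ℝ :=
  (2 : ENNReal)⁻¹ • Measure.dirac (1 : ℝ) + (2 : ENNReal)⁻¹ • Measure.dirac (-1 : ℝ)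


noncomputable def sgn (b : Bool) : ℝ := if b then 1 else -1

lemma signMeasure_eq : signMeasure = (2 : ENNReal)⁻¹ • ∑ b : Bool, Measure.dirac (sgn b) := by
  rw [Fintype.sum_bool]
  simp [signMeasure, sgn, smul_add]

lemma pi_discrete {ι : Type} [Fintype ι] [DecidableEq ι] {β : Type*} [MeasurableSpace β]
    [MeasurableSingletonClass β]
    {T : Type*} [Fintype T] (v : T → β) (c : ENNReal) (hc : c ≠ ⊤) :
    Measure.pi (fun _ : ι => c • ∑ t : T, Measure.dirac (v t)) =
      (c ^ Fintype.card ι) • ∑ f : ι → T, Measure.dirac (fun i => v (f i)) := by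
  classical
  have hfin : IsFiniteMeasure (c • ∑ t : T, Measure.dirac (v t)) := by
    constructor
    rw [Measure.smul_apply, Measure.finset_sum_apply]
    simp only [Measure.dirac_apply_of_mem (Set.mem_univ _)]
    simp only [Finset.sum_const, Finset.card_univ, nsmul_eq_mul, mul_one, smul_eq_mul]
    exact ENNReal.mul_lt_top hc.lt_top (by simp)
  refine (Measure.pi_eq fun s hs => ?_)
  rw [Measure.smul_apply, Measure.finset_sum_apply]
  have hmeas : MeasurableSet (Set.pi Set.univ s) := MeasurableSet.univ_pi hs
  have h1 : ∀ f : ι → T, Measure.dirac (fun i => v (f i)) (Set.pi Set.univ s)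
      = ∏ i, (if v (f i) ∈ s i then 1 else 0 : ENNReal) := by
    intro f
    rw [Measure.dirac_apply, Set.indicator_apply, Finset.prod_boole]
    simp [Set.mem_univ_pi]
  simp_rw [h1]
  rw [← Fintype.prod_sum (f := fun (i : ι) (t : T) => (if v t ∈ s i then 1 else 0 : ENNReal))]
  have h2 : ∀ i : ι, (c • ∑ t : T, Measure.dirac (v t)) (s i)
      = c * ∑ t : T, (if v t ∈ s i then 1 else 0 : ENNReal) := by
    intro i
    rw [Measure.smul_apply, Measure.finset_sum_apply, smul_eq_mul]
    congr 1
    refine Finset.sum_congr rfl fun t _ => ?_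
    rw [Measure.dirac_apply, Set.indicator_apply]
    rfl
  simp_rw [h2]
  rw [Finset.prod_mul_distrib, Finset.prod_const, Finset.card_univ, smul_eq_mul]

noncomputable def matOf {m d : ℕ} (g : Fin m → Fin d → Bool) : Fin m → Fin d → ℝ :=
  fun i j => sgn (g i j)

lemma matOf_injective {m d : ℕ} : Function.Injective (matOf (m := m) (d := d)) := by
  intro g h hgh
  funext i j
  have := congrFun (congrFun hgh i) j
  simp only [matOf, sgn] at this
  cases hg : g i j <;> cases hh : h i j <;> simp [hg, hh] at this <;> try rfl
  · norm_num at this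
  · norm_num at this

lemma pi_pi_sign (m d : ℕ) :
    Measure.pi (fun _ : Fin m => Measure.pi fun _ : Fin d => signMeasure) =
      (((2:ENNReal)⁻¹ ^ d) ^ m) • ∑ g : Fin m → Fin d → Bool, Measure.dirac (matOf g) := by
  have h1 : Measure.pi (fun _ : Fin d => signMeasure)
      = ((2:ENNReal)⁻¹ ^ d) • ∑ f : Fin d → Bool, Measure.dirac (fun j => sgn (f j)) := by
    rw [signMeasure_eq]
    simpa using pi_discrete (ι := Fin d) sgn (2:ENNReal)⁻¹ (by simp)
  calc Measure.pi (fun _ : Fin m => Measure.pi fun _ : Fin d => signMeasure)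
      = Measure.pi (fun _ : Fin m =>
          ((2:ENNReal)⁻¹ ^ d) • ∑ f : Fin d → Bool, Measure.dirac (fun j => sgn (f j))) := by
        rw [h1]
    _ = _ := by
        have h2 := pi_discrete (ι := Fin m)
          (v := fun f : Fin d → Bool => (fun j => sgn (f j) : Fin d → ℝ))
          ((2:ENNReal)⁻¹ ^ d) (by simp)
        rw [Fintype.card_fin] at h2
        exact h2

lemma chernoff_count {m d : ℕ} (a : Fin m → Fin d → ℝ) (ha : ∑ i, ∑ j, a i j ^ 2 ≤ 1)
    {s : ℝ} (hs : 0 ≤ s) :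
    ((Finset.univ.filter (fun g : Fin m → Fin d → Bool =>
        s ≤ ∑ i, ∑ j, a i j * sgn (g i j))).card : ℝ)
      ≤ 2 ^ (m * d) * Real.exp (-(s ^ 2) / 2) := by
  classical
  set X : (Fin m → Fin d → Bool) → ℝ := fun g => ∑ i, ∑ j, a i j * sgn (g i j) with hX
  have step1 : ((Finset.univ.filter fun g => s ≤ X g).card : ℝ)
      ≤ ∑ g : Fin m → Fin d → Bool, Real.exp (s * X g - s ^ 2) := by
    rw [Finset.card_eq_sum_ones, Nat.cast_sum]
    refine le_trans (Finset.sum_le_sum ?_)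
      (Finset.sum_le_sum_of_subset_of_nonneg (Finset.filter_subset _ _)
        (fun _ _ _ => (Real.exp_pos _).le))
    intro g hg
    simp only [Finset.mem_filter] at hg
    have h0 : 0 ≤ s * X g - s ^ 2 := by nlinarith [hg.2]
    simpa using Real.one_le_exp h0
  have step2 : ∀ g, Real.exp (s * X g - s ^ 2)
      = Real.exp (-(s ^ 2)) * ∏ i, ∏ j, Real.exp (s * (a i j * sgn (g i j))) := by
    intro g
    have h1 : s * X g - s ^ 2 = -(s ^ 2) + ∑ i, ∑ j, s * (a i j * sgn (g i j)) := by
      rw [hX]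
      simp only [Finset.mul_sum]
      ring
    rw [h1, Real.exp_add]
    congr 1
    rw [Real.exp_sum]
    exact Finset.prod_congr rfl fun i _ => (Real.exp_sum _ _)
  have step3 : ∑ g : Fin m → Fin d → Bool, ∏ i, ∏ j, Real.exp (s * (a i j * sgn (g i j)))
      = ∏ i, ∏ j, (Real.exp (s * a i j) + Real.exp (-(s * a i j))) := by
    rw [← Fintype.prod_sum (f := fun (i : Fin m) (h : Fin d → Bool) =>
      ∏ j, Real.exp (s * (a i j * sgn (h j))))]
    refine Finset.prod_congr rfl fun i _ => ?_
    rw [← Fintype.prod_sum (f := fun (j : Fin d) (b : Bool) => Real.exp (s * (a i j * sgn b)))]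
    refine Finset.prod_congr rfl fun j _ => ?_
    rw [Fintype.sum_bool]
    simp [sgn]
  have step4 : ∏ i, ∏ j, (Real.exp (s * a i j) + Real.exp (-(s * a i j)))
      ≤ 2 ^ (m * d) * Real.exp (s ^ 2 * (∑ i, ∑ j, a i j ^ 2) / 2) := by
    have hc : ∀ (i : Fin m) (j : Fin d),
        Real.exp (s * a i j) + Real.exp (-(s * a i j))
          ≤ 2 * Real.exp ((s * a i j) ^ 2 / 2) := by
      intro i j
      have := Real.cosh_le_exp_half_sq (s * a i j)
      rw [Real.cosh_eq] at this
      linarith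
    calc ∏ i, ∏ j, (Real.exp (s * a i j) + Real.exp (-(s * a i j)))
        ≤ ∏ i, ∏ j, 2 * Real.exp ((s * a i j) ^ 2 / 2) := by
          refine Finset.prod_le_prod (fun i _ => Finset.prod_nonneg fun j _ => by positivity)
            (fun i _ => Finset.prod_le_prod (fun j _ => by positivity) (fun j _ => hc i j))
      _ = 2 ^ (m * d) * Real.exp (s ^ 2 * (∑ i, ∑ j, a i j ^ 2) / 2) := by
          simp only [Finset.prod_mul_distrib, Finset.prod_const, Finset.card_univ,
            Fintype.card_fin]
          congr 1
          · rw [← pow_mul, mul_comm]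
          · simp only [← Real.exp_sum]
            congr 1
            have h3 : ∀ (i : Fin m) (j : Fin d), (s * a i j) ^ 2 / 2 = s ^ 2 * a i j ^ 2 / 2 := by
              intro i j; ring
            simp_rw [h3]
            rw [Finset.mul_sum, Finset.sum_div]
            refine Finset.sum_congr rfl fun i _ => ?_
            rw [Finset.mul_sum, Finset.sum_div]
  calc ((Finset.univ.filter fun g => s ≤ X g).card : ℝ)
      ≤ ∑ g : Fin m → Fin d → Bool, Real.exp (s * X g - s ^ 2) := step1
    _ = Real.exp (-(s ^ 2)) *
        ∑ g : Fin m → Fin d → Bool, ∏ i, ∏ j, Real.exp (s * (a i j * sgn (g i j))) := by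
          rw [Finset.mul_sum]
          exact Finset.sum_congr rfl fun g _ => step2 g
    _ = Real.exp (-(s ^ 2)) *
        ∏ i, ∏ j, (Real.exp (s * a i j) + Real.exp (-(s * a i j))) := by rw [step3]
    _ ≤ Real.exp (-(s ^ 2)) *
        (2 ^ (m * d) * Real.exp (s ^ 2 * (∑ i, ∑ j, a i j ^ 2) / 2)) := by
          exact mul_le_mul_of_nonneg_left step4 (Real.exp_pos _).le
    _ ≤ 2 ^ (m * d) * Real.exp (-(s ^ 2) / 2) := by
          rw [← mul_assoc, mul_comm (Real.exp _) ((2:ℝ) ^ (m * d)), mul_assoc, ← Real.exp_add]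
          refine mul_le_mul_of_nonneg_left (Real.exp_le_exp.2 ?_) (by positivity)
          have hsq : 0 ≤ s ^ 2 := sq_nonneg s
          nlinarith

open Metric in
lemma net_exists (n : ℕ) (hn : 0 < n) :
    ∃ N : Finset (EuclideanSpace ℝ (Fin n)),
      (∀ y ∈ N, ‖y‖ = 1) ∧ N.card ≤ 10 ^ n ∧
      ∀ x : EuclideanSpace ℝ (Fin n), ‖x‖ = 1 → ∃ y ∈ N, dist x y ≤ 1 / 4 := by
  classical
  set E := EuclideanSpace ℝ (Fin n)
  haveI : Nontrivial E := by
    refine nontrivial_of_ne 0 (EuclideanSpace.single ⟨0, hn⟩ 1) ?_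
    intro h
    have h2 := congrFun (congrArg (fun v : E => (v : Fin n → ℝ)) h) ⟨0, hn⟩
    simp only [EuclideanSpace.single_apply, if_pos rfl] at h2
    exact zero_ne_one h2
  set S : Set (Set E) := {A | A ⊆ sphere (0 : E) 1 ∧
    A.Pairwise (fun x y => 1 / 4 < dist x y)} with hS
  obtain ⟨M, hM⟩ := zorn_subset S (by
    intro c hcS hchain
    refine ⟨⋃₀ c, ⟨?_, ?_⟩, fun s hs => Set.subset_sUnion_of_mem hs⟩
    · exact Set.sUnion_subset fun s hs => (hcS hs).1
    · intro x hx y hy hxy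
      obtain ⟨s₁, hs₁, hxs⟩ := hx
      obtain ⟨s₂, hs₂, hys⟩ := hy
      rcases hchain.total hs₁ hs₂ with h | h
      · exact (hcS hs₂).2 (h hxs) hys hxy
      · exact (hcS hs₁).2 hxs (h hys) hxy)
  have hMsub : M ⊆ sphere (0 : E) 1 := hM.prop.1
  have hMsep : M.Pairwise (fun x y => 1 / 4 < dist x y) := hM.prop.2
  -- covering property
  have hcov : ∀ x : E, ‖x‖ = 1 → ∃ y ∈ M, dist x y ≤ 1 / 4 := by
    intro x hx
    by_contra hcon
    push_neg at hcon
    have hxM : x ∉ M := fun hxm => by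
      have h' := hcon x hxm
      rw [dist_self] at h'
      norm_num at h'
    have : insert x M ∈ S := by
      constructor
      · exact Set.insert_subset (by simpa [mem_sphere_iff_norm] using hx) hMsub
      · intro u hu v hv huv
        rcases Set.mem_insert_iff.1 hu with hux | hu
        · rcases Set.mem_insert_iff.1 hv with hvx | hv
          · exact absurd (hux.trans hvx.symm) huv
          · rw [hux]; exact hcon v hv
        · rcases Set.mem_insert_iff.1 hv with hvx | hv
          · rw [hvx, dist_comm]; exact hcon u hu
          · exact hMsep hu hv huv
    have := hM.eq_of_subset this (Set.subset_insert x M)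
    exact hxM (this ▸ Set.mem_insert x M)
  -- cardinality bound for finite subsets
  have hcard : ∀ F : Finset E, ↑F ⊆ M → F.card ≤ 10 ^ n := by
    intro F hF
    have hdisj : (↑F : Set E).PairwiseDisjoint (fun y => ball y (1 / 8)) := by
      intro u hu v hv huv
      refine Set.disjoint_left.2 fun z hzu hzv => ?_
      have : dist u v < 1 / 4 := by
        calc dist u v ≤ dist u z + dist z v := dist_triangle _ _ _
          _ < 1 / 8 + 1 / 8 := by
              rw [mem_ball] at hzu hzv
              rw [dist_comm u z]
              linarith
          _ = 1 / 4 := by norm_num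
      exact absurd this (not_lt.2 (hMsep (hF hu) (hF hv) huv).le)
    have hmeas : MeasureTheory.volume (⋃ y ∈ F, ball y (1 / 8))
        = ∑ y ∈ F, MeasureTheory.volume (ball y (1 / 8)) :=
      measure_biUnion_finset hdisj fun y _ => measurableSet_ball
    have hsub : (⋃ y ∈ F, ball y (1 / 8)) ⊆ ball (0 : E) (5 / 4) := by
      refine Set.iUnion₂_subset fun y hy => ?_
      intro z hz
      rw [mem_ball] at hz ⊢
      have hyn : ‖y‖ = 1 := by
        have := hMsub (hF hy); rwa [mem_sphere_zero_iff_norm] at this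
      calc dist z (0 : E) ≤ dist z y + dist y 0 := dist_triangle _ _ _
        _ < 1 / 8 + 1 := by rw [dist_zero_right, hyn]; linarith
        _ ≤ 5 / 4 := by norm_num
    have hrank : Module.finrank ℝ E = n := finrank_euclideanSpace_fin
    have hball : ∀ y : E, MeasureTheory.volume (ball y (1 / 8))
        = ENNReal.ofReal ((1 / 8 : ℝ) ^ n) * MeasureTheory.volume (ball (0 : E) 1) := by
      intro y
      rw [MeasureTheory.Measure.addHaar_ball (μ := MeasureTheory.volume) y
        (by norm_num : (0:ℝ) ≤ 1 / 8), hrank]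
    have hbigball : MeasureTheory.volume (ball (0 : E) (5 / 4))
        = ENNReal.ofReal ((5 / 4 : ℝ) ^ n) * MeasureTheory.volume (ball (0 : E) 1) := by
      rw [MeasureTheory.Measure.addHaar_ball (μ := MeasureTheory.volume) (0 : E)
        (by norm_num : (0:ℝ) ≤ 5 / 4), hrank]
    have hV0 : MeasureTheory.volume (ball (0 : E) 1) ≠ 0 :=
      (measure_ball_pos _ _ one_pos).ne'
    have hVtop : MeasureTheory.volume (ball (0 : E) 1) ≠ ⊤ :=
      measure_ball_lt_top.ne
    have hle : (F.card : ENNReal) * (ENNReal.ofReal ((1 / 8 : ℝ) ^ n)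
          * MeasureTheory.volume (ball (0 : E) 1))
        ≤ ENNReal.ofReal ((5 / 4 : ℝ) ^ n) * MeasureTheory.volume (ball (0 : E) 1) := by
      rw [← hbigball]
      calc (F.card : ENNReal) * (ENNReal.ofReal ((1 / 8 : ℝ) ^ n)
            * MeasureTheory.volume (ball (0 : E) 1))
          = ∑ y ∈ F, MeasureTheory.volume (ball y (1 / 8)) := by
            simp only [hball, Finset.sum_const, nsmul_eq_mul]
        _ = MeasureTheory.volume (⋃ y ∈ F, ball y (1 / 8)) := hmeas.symm
        _ ≤ _ := measure_mono hsub
    have hle2 : (F.card : ENNReal) * ENNReal.ofReal ((1 / 8 : ℝ) ^ n)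
        ≤ ENNReal.ofReal ((5 / 4 : ℝ) ^ n) := by
      rw [← mul_assoc] at hle
      exact (ENNReal.mul_le_mul_iff_left hV0 hVtop).1 hle
    have hsplit : ENNReal.ofReal ((5 / 4 : ℝ) ^ n)
        = ((10 ^ n : ℕ) : ENNReal) * ENNReal.ofReal ((1 / 8 : ℝ) ^ n) := by
      rw [← ENNReal.ofReal_natCast, ← ENNReal.ofReal_mul (by positivity)]
      congr 1
      push_cast
      rw [← mul_pow]
      norm_num
    rw [hsplit] at hle2
    have h8 : ENNReal.ofReal ((1 / 8 : ℝ) ^ n) ≠ 0 := by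
      rw [Ne, ENNReal.ofReal_eq_zero, not_le]
      positivity
    have hcard' : (F.card : ENNReal) ≤ ((10 ^ n : ℕ) : ENNReal) :=
      (ENNReal.mul_le_mul_iff_left h8 ENNReal.ofReal_ne_top).1 hle2
    exact_mod_cast hcard'
  have hMfin : M.Finite := by
    by_contra hinf
    obtain ⟨F, hFsub, hFcard⟩ := (Set.Infinite.exists_subset_card_eq hinf (10 ^ n + 1))
    have := hcard F hFsub
    omega
  refine ⟨hMfin.toFinset, ?_, ?_, ?_⟩
  · intro y hy
    have := hMsub (hMfin.mem_toFinset.1 hy)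
    rwa [mem_sphere_zero_iff_norm] at this
  · exact hcard hMfin.toFinset (by simp)
  · intro x hx
    obtain ⟨y, hy, hxy⟩ := hcov x hx
    exact ⟨y, hMfin.mem_toFinset.2 hy, hxy⟩

lemma opnorm_of_net {dd mm : ℕ}
    (T : EuclideanSpace ℝ (Fin dd) →L[ℝ] EuclideanSpace ℝ (Fin mm))
    (s : ℝ) (hs : 0 ≤ s)
    (N : Finset (EuclideanSpace ℝ (Fin dd))) (M : Finset (EuclideanSpace ℝ (Fin mm)))
    (hN1 : ∀ y ∈ N, ‖y‖ = 1) (hNcov : ∀ x, ‖x‖ = 1 → ∃ y ∈ N, dist x y ≤ 1/4)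
    (hM1 : ∀ y ∈ M, ‖y‖ = 1) (hMcov : ∀ x, ‖x‖ = 1 → ∃ y ∈ M, dist x y ≤ 1/4)
    (hgood : ∀ u ∈ N, ∀ v ∈ M, (inner ℝ v (T u) : ℝ) ≤ s) :
    ‖T‖ ≤ 2 * s := by
  have key : ∀ u : EuclideanSpace ℝ (Fin dd), ‖u‖ = 1 → ‖T u‖ ≤ s + ‖T‖ / 2 := by
    intro u hu
    rcases eq_or_ne (T u) 0 with h0 | h0
    · rw [h0, norm_zero]; positivity
    · set v : EuclideanSpace ℝ (Fin mm) := ‖T u‖⁻¹ • (T u) with hv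
      have hvn : ‖v‖ = 1 := norm_smul_inv_norm h0
      obtain ⟨u₀, hu₀N, huu₀⟩ := hNcov u hu
      obtain ⟨v₀, hv₀M, hvv₀⟩ := hMcov v hvn
      have hTu : ‖T u‖ = (inner ℝ v (T u) : ℝ) := by
        rw [hv, real_inner_smul_left, real_inner_self_eq_norm_sq]
        have : ‖T u‖ ≠ 0 := norm_ne_zero_iff.2 h0
        field_simp
      have hdecomp : (inner ℝ v (T u) : ℝ)
          = (inner ℝ v₀ (T u₀) : ℝ) + (inner ℝ v (T (u - u₀)) : ℝ)
            + (inner ℝ (v - v₀) (T u₀) : ℝ) := by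
        simp only [inner_sub_left, inner_sub_right, map_sub]
        ring
      have h1 : (inner ℝ v (T (u - u₀)) : ℝ) ≤ ‖T‖ / 4 := by
        calc (inner ℝ v (T (u - u₀)) : ℝ) ≤ ‖v‖ * ‖T (u - u₀)‖ := real_inner_le_norm _ _
          _ ≤ 1 * (‖T‖ * ‖u - u₀‖) := by
              rw [hvn, one_mul, one_mul]
              exact T.le_opNorm _
          _ ≤ ‖T‖ / 4 := by
              rw [one_mul]
              have hd : ‖u - u₀‖ ≤ 1/4 := by rwa [← dist_eq_norm]
              nlinarith [norm_nonneg T, norm_nonneg (u - u₀)]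
      have h2 : (inner ℝ (v - v₀) (T u₀) : ℝ) ≤ ‖T‖ / 4 := by
        calc (inner ℝ (v - v₀) (T u₀) : ℝ) ≤ ‖v - v₀‖ * ‖T u₀‖ := real_inner_le_norm _ _
          _ ≤ ‖T‖ / 4 := by
              have hd : ‖v - v₀‖ ≤ 1/4 := by rwa [← dist_eq_norm]
              have hT0 : ‖T u₀‖ ≤ ‖T‖ := by
                have := T.le_opNorm u₀
                rwa [hN1 u₀ hu₀N, mul_one] at this
              nlinarith [norm_nonneg (v - v₀), (norm_nonneg (T u₀))]
      have h3 : (inner ℝ v₀ (T u₀) : ℝ) ≤ s := hgood u₀ hu₀N v₀ hv₀M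
      rw [hTu, hdecomp]
      linarith
  have key2 : ∀ x, ‖T x‖ ≤ (s + ‖T‖ / 2) * ‖x‖ := by
    intro x
    rcases eq_or_ne x 0 with rfl | hx
    · simp
    · have hxpos : 0 < ‖x‖ := norm_pos_iff.2 hx
      have hux : ‖(‖x‖⁻¹ • x : EuclideanSpace ℝ (Fin dd))‖ = 1 := norm_smul_inv_norm hx
      have hk := key _ hux
      rw [_root_.map_smul, norm_smul, norm_inv, norm_norm] at hk
      rw [mul_comm]
      calc ‖T x‖ = ‖x‖ * (‖x‖⁻¹ * ‖T x‖) := by field_simp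
        _ ≤ ‖x‖ * (s + ‖T‖ / 2) := by
            exact mul_le_mul_of_nonneg_left hk hxpos.le
  have hfin : ‖T‖ ≤ s + ‖T‖ / 2 :=
    T.opNorm_le_bound (by positivity) key2
  linarith

lemma mulVec_sq_bound {m d : ℕ} (W : Matrix (Fin m) (Fin d) ℝ) (K : ℝ) (hK : 0 ≤ K)
    (h : ‖LinearMap.toContinuousLinearMap (Matrix.toEuclideanLin W)‖ ≤ K) :
    ∀ u : Fin d → ℝ, ∑ i, (W.mulVec u i) ^ 2 ≤ K ^ 2 * ∑ j, (u j) ^ 2 := by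
  intro u
  set uE : EuclideanSpace ℝ (Fin d) := (WithLp.equiv 2 (Fin d → ℝ)).symm u with huE
  have happ : LinearMap.toContinuousLinearMap (Matrix.toEuclideanLin W) uE
      = (WithLp.equiv 2 (Fin m → ℝ)).symm (W.mulVec u) := by
    rw [LinearMap.coe_toContinuousLinearMap']
    exact Matrix.toEuclideanLin_apply_piLp_toLp W u
  have hnorm := (LinearMap.toContinuousLinearMap (Matrix.toEuclideanLin W)).le_opNorm uE
  rw [happ] at hnorm
  have h1 : ‖(WithLp.equiv 2 (Fin m → ℝ)).symm (W.mulVec u)‖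
      = Real.sqrt (∑ i, (W.mulVec u i) ^ 2) := by
    rw [EuclideanSpace.norm_eq]
    congr 1
    refine Finset.sum_congr rfl fun i _ => ?_
    rw [WithLp.equiv_symm_apply, PiLp.toLp_apply, Real.norm_eq_abs, sq_abs]
  have h2 : ‖uE‖ = Real.sqrt (∑ j, (u j) ^ 2) := by
    rw [huE, EuclideanSpace.norm_eq]
    congr 1
    refine Finset.sum_congr rfl fun j _ => ?_
    rw [WithLp.equiv_symm_apply, PiLp.toLp_apply, Real.norm_eq_abs, sq_abs]
  rw [h1, h2] at hnorm
  have hle : Real.sqrt (∑ i, (W.mulVec u i) ^ 2) ≤ K * Real.sqrt (∑ j, (u j) ^ 2) :=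
    hnorm.trans (mul_le_mul_of_nonneg_right h (Real.sqrt_nonneg _))
  have hs1 : (0:ℝ) ≤ ∑ i, (W.mulVec u i) ^ 2 := Finset.sum_nonneg fun i _ => sq_nonneg _
  have hs2 : (0:ℝ) ≤ ∑ j, (u j) ^ 2 := Finset.sum_nonneg fun j _ => sq_nonneg _
  have := mul_self_le_mul_self (Real.sqrt_nonneg _) hle
  rw [Real.mul_self_sqrt hs1] at this
  calc ∑ i, (W.mulVec u i) ^ 2 ≤ (K * Real.sqrt (∑ j, (u j) ^ 2))
      * (K * Real.sqrt (∑ j, (u j) ^ 2)) := this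
    _ = K ^ 2 * ∑ j, (u j) ^ 2 := by
        rw [mul_mul_mul_comm, Real.mul_self_sqrt hs2]
        ring

lemma gram_bound {κ : Type} [Fintype κ] {m d : ℕ} (W : Matrix (Fin m) (Fin d) ℝ)
    (K : ℝ) (hK : 0 ≤ K)
    (hW : ∀ u : Fin d → ℝ, ∑ i, (W.mulVec u i) ^ 2 ≤ K ^ 2 * ∑ j, (u j) ^ 2)
    (v0 : κ → ℝ) (vx : Fin d → κ → ℝ) (vz : Fin m → κ → ℝ)
    (h1 : ∑ k, v0 k * v0 k = 1)
    (hx : ∀ j, ∑ k, vx j k * vx j k ≤ 1)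
    (hz : ∀ i, ∑ k, vz i k * vz i k = ∑ j, W i j * ∑ k, vx j k * vz i k) :
    ∑ i, ∑ k, v0 k * vz i k ≤ K * Real.sqrt m * Real.sqrt d := by
  classical
  set Z : Fin m → ℝ := fun i => ∑ k, vz i k ^ 2 with hZdef
  have hZnn : ∀ i, 0 ≤ Z i := fun i => Finset.sum_nonneg fun k _ => sq_nonneg _
  have h1' : ∑ k, v0 k ^ 2 = 1 := by simpa [sq] using h1
  have hZz : ∀ i, Z i = ∑ k, vz i k * vz i k := by
    intro i; rw [hZdef]; exact Finset.sum_congr rfl fun k _ => sq (vz i k) ▸ (by rw [sq])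
  -- step 1 : each inner product is at most sqrt (Z i)
  have o_le : ∀ i, ∑ k, v0 k * vz i k ≤ Real.sqrt (Z i) := by
    intro i
    have hcs := Finset.sum_mul_sq_le_sq_mul_sq Finset.univ v0 (vz i)
    rw [h1', one_mul] at hcs
    calc ∑ k, v0 k * vz i k ≤ |∑ k, v0 k * vz i k| := le_abs_self _
      _ = Real.sqrt ((∑ k, v0 k * vz i k) ^ 2) := (Real.sqrt_sq_eq_abs _).symm
      _ ≤ Real.sqrt (Z i) := Real.sqrt_le_sqrt hcs
  -- step 2 : sum of sqrts
  set T : ℝ := ∑ i, Z i with hTdef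
  have hTnn : 0 ≤ T := Finset.sum_nonneg fun i _ => hZnn i
  have hS : ∑ i, Real.sqrt (Z i) ≤ Real.sqrt m * Real.sqrt T := by
    have hcs := Finset.sum_mul_sq_le_sq_mul_sq Finset.univ
      (fun _ : Fin m => (1:ℝ)) (fun i => Real.sqrt (Z i))
    simp only [one_mul, one_pow, Finset.sum_const, Finset.card_univ, Fintype.card_fin,
      nsmul_eq_mul, mul_one] at hcs
    have hsq : ∀ i : Fin m, Real.sqrt (Z i) ^ 2 = Z i := fun i => Real.sq_sqrt (hZnn i)
    simp only [hsq] at hcs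
    have hnn : 0 ≤ ∑ i, Real.sqrt (Z i) := Finset.sum_nonneg fun i _ => Real.sqrt_nonneg _
    calc ∑ i, Real.sqrt (Z i) = Real.sqrt ((∑ i, Real.sqrt (Z i)) ^ 2) := by
          rw [Real.sqrt_sq hnn]
      _ ≤ Real.sqrt ((m : ℝ) * T) := Real.sqrt_le_sqrt hcs
      _ = Real.sqrt m * Real.sqrt T := Real.sqrt_mul (Nat.cast_nonneg m) T
  -- step 3 : T ≤ sqrt (sum of squared row images) * sqrt T
  set p : Fin m → κ → ℝ := fun i k => ∑ j, W i j * vx j k with hpdef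
  have hzp : ∀ i, Z i = ∑ k, p i k * vz i k := by
    intro i
    rw [hZz i, hz i]
    simp only [hpdef, Finset.mul_sum, Finset.sum_mul]
    rw [Finset.sum_comm]
    exact Finset.sum_congr rfl fun k _ => Finset.sum_congr rfl fun j _ => by ring
  set A : ℝ := Real.sqrt (∑ i, ∑ k, p i k ^ 2) with hAdef
  have hAnn : 0 ≤ A := Real.sqrt_nonneg _
  have hTA : T ≤ A * Real.sqrt T := by
    have hT2 : T = ∑ q : Fin m × κ, p q.1 q.2 * vz q.1 q.2 := by
      rw [hTdef, Fintype.sum_prod_type]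
      exact Finset.sum_congr rfl fun i _ => hzp i
    have hcs := Finset.sum_mul_sq_le_sq_mul_sq Finset.univ
      (fun q : Fin m × κ => p q.1 q.2) (fun q : Fin m × κ => vz q.1 q.2)
    have hsplit1 : ∑ q : Fin m × κ, p q.1 q.2 ^ 2 = ∑ i, ∑ k, p i k ^ 2 :=
      Fintype.sum_prod_type _
    have hsplit2 : ∑ q : Fin m × κ, vz q.1 q.2 ^ 2 = T := by
      rw [hTdef, Fintype.sum_prod_type]
    rw [hsplit1, hsplit2] at hcs
    calc T ≤ |T| := le_abs_self T
      _ = Real.sqrt (T ^ 2) := (Real.sqrt_sq_eq_abs T).symm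
      _ = Real.sqrt ((∑ q : Fin m × κ, p q.1 q.2 * vz q.1 q.2) ^ 2) := by rw [← hT2]
      _ ≤ Real.sqrt ((∑ i, ∑ k, p i k ^ 2) * T) := Real.sqrt_le_sqrt hcs
      _ = A * Real.sqrt T := by rw [Real.sqrt_mul (Finset.sum_nonneg fun i _ =>
            Finset.sum_nonneg fun k _ => sq_nonneg _)]
  have hsqrtT : Real.sqrt T ≤ A := by
    rcases eq_or_lt_of_le hTnn with h0 | h0
    · rw [← h0, Real.sqrt_zero]; exact hAnn
    · have hst : 0 < Real.sqrt T := Real.sqrt_pos.2 h0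
      have : Real.sqrt T * Real.sqrt T ≤ A * Real.sqrt T := by
        rw [Real.mul_self_sqrt hTnn]; exact hTA
      exact le_of_mul_le_mul_right this hst
  -- step 4 : bound A
  have hA2 : ∑ i, ∑ k, p i k ^ 2 ≤ K ^ 2 * d := by
    rw [Finset.sum_comm]
    calc ∑ k, ∑ i, p i k ^ 2 ≤ ∑ k : κ, K ^ 2 * ∑ j, vx j k ^ 2 := by
          refine Finset.sum_le_sum fun k _ => ?_
          have := hW (fun j => vx j k)
          simpa [Matrix.mulVec, dotProduct, hpdef] using this
      _ = K ^ 2 * ∑ j, ∑ k, vx j k ^ 2 := by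
          rw [← Finset.mul_sum, Finset.sum_comm]
      _ ≤ K ^ 2 * d := by
          refine mul_le_mul_of_nonneg_left ?_ (sq_nonneg K)
          calc ∑ j, ∑ k, vx j k ^ 2 ≤ ∑ j : Fin d, (1:ℝ) := by
                refine Finset.sum_le_sum fun j _ => ?_
                have := hx j
                simpa [sq] using this
            _ = d := by simp
  have hAle : A ≤ K * Real.sqrt d := by
    rw [hAdef]
    calc Real.sqrt (∑ i, ∑ k, p i k ^ 2) ≤ Real.sqrt (K ^ 2 * d) := Real.sqrt_le_sqrt hA2
      _ = K * Real.sqrt d := by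
          rw [Real.sqrt_mul (sq_nonneg K), Real.sqrt_sq hK]
  calc ∑ i, ∑ k, v0 k * vz i k ≤ ∑ i, Real.sqrt (Z i) := Finset.sum_le_sum fun i _ => o_le i
    _ ≤ Real.sqrt m * Real.sqrt T := hS
    _ ≤ Real.sqrt m * (K * Real.sqrt d) := by
        refine mul_le_mul_of_nonneg_left (hsqrtT.trans hAle) (Real.sqrt_nonneg _)
    _ = K * Real.sqrt m * Real.sqrt d := by ring

lemma fSDP_le_of_normBound {m d : ℕ} (W : Matrix (Fin m) (Fin d) ℝ) (K : ℝ) (hK : 0 ≤ K)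
    (hW : ∀ u : Fin d → ℝ, ∑ i, (W.mulVec u i) ^ 2 ≤ K ^ 2 * ∑ j, (u j) ^ 2) :
    fSDP W ≤ K * Real.sqrt m * Real.sqrt d := by
  have hKmd : 0 ≤ K * Real.sqrt m * Real.sqrt d := by positivity
  refine Real.sSup_le ?_ hKmd
  rintro v ⟨P, ⟨hPSD, hP1, hPo, _, hPz, hPx⟩, rfl⟩
  obtain ⟨r, B, hB⟩ := Matrix.posSemidef_iff_eq_sum_vecMulVec.1 hPSD
  have hP : ∀ α β : Unit ⊕ Fin d ⊕ Fin m, P α β = ∑ k, B k α * B k β := by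
    intro α β
    rw [hB]
    simp [Matrix.sum_apply, Matrix.vecMulVec_apply]
  have key := gram_bound W K hK hW
    (fun k => B k (Sum.inl ()))
    (fun j k => B k (Sum.inr (Sum.inl j)))
    (fun i k => B k (Sum.inr (Sum.inr i)))
    (by rw [← hP]; exact hP1)
    (fun j => by rw [← hP]; exact hPx j)
    (fun i => by
      rw [← hP]
      simp only [← hP]
      exact hPz i)
  calc ∑ i, P (Sum.inl ()) (Sum.inr (Sum.inr i))
      = ∑ i, ∑ k, B k (Sum.inl ()) * B k (Sum.inr (Sum.inr i)) :=
        Finset.sum_congr rfl fun i _ => hP _ _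
    _ ≤ K * Real.sqrt m * Real.sqrt d := key

lemma fLP_ge_of_sign {m d : ℕ} (hd : 0 < d) (W : Matrix (Fin m) (Fin d) ℝ)
    (hW : ∀ i j, W i j = 1 ∨ W i j = -1) :
    (m * d : ℝ) / 2 ≤ fLP W := by
  classical
  have habs : ∀ i j, |W i j| = 1 := by
    intro i j
    rcases hW i j with h | h <;> rw [h] <;> norm_num
  have hrow : ∀ i, ∑ j, |W i j| = (d : ℝ) := by
    intro i
    simp [habs]
  have hdpos : (0:ℝ) < d := by exact_mod_cast hd
  have hmvbound : ∀ (x : Fin d → ℝ), (∀ j, |x j| ≤ 1) → ∀ i, (W.mulVec x) i ≤ d := by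
    intro x hx i
    calc (W.mulVec x) i = ∑ j, W i j * x j := by
          simp [Matrix.mulVec, dotProduct]
      _ ≤ ∑ j, |W i j * x j| := Finset.sum_le_sum fun j _ => le_abs_self _
      _ ≤ ∑ j, (1:ℝ) := by
          refine Finset.sum_le_sum fun j _ => ?_
          rw [abs_mul, habs, one_mul]
          exact hx j
      _ = d := by simp
  -- bddAbove
  have hbdd : BddAbove {v : ℝ | ∃ x z, LPFeasible W x z ∧ v = ∑ i, z i} := by
    refine ⟨m * d, ?_⟩
    rintro v ⟨x, z, ⟨hz0, hzl, hzu, hx⟩, rfl⟩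
    have hzle : ∀ i, z i ≤ d := by
      intro i
      have h := hzu i
      simp only [hrow i] at h
      rw [max_eq_left hdpos.le, max_eq_right (by linarith : -(d:ℝ) ≤ 0)] at h
      have hden : (d:ℝ) - -d = 2 * d := by ring
      rw [hden] at h
      have hmv := hmvbound x hx i
      calc z i ≤ (d - 0) / (2 * d) * ((W.mulVec x) i - -d) + 0 := h
        _ = ((W.mulVec x) i + d) / 2 := by field_simp; ring
        _ ≤ (d + d) / 2 := by linarith
        _ = d := by ring
    calc ∑ i, z i ≤ ∑ i : Fin m, (d:ℝ) := Finset.sum_le_sum fun i _ => hzle i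
      _ = m * d := by simp [mul_comm]
  -- feasible point
  have hmem : (m * d : ℝ) / 2 ∈ {v : ℝ | ∃ x z, LPFeasible W x z ∧ v = ∑ i, z i} := by
    refine ⟨(0 : Fin d → ℝ), fun _ => (d:ℝ)/2, ⟨?_, ?_, ?_, ?_⟩, ?_⟩
    · intro i; positivity
    · intro i
      rw [Matrix.mulVec_zero]
      simp
      positivity
    · intro i
      simp only [hrow i, Matrix.mulVec_zero, Pi.zero_apply]
      rw [max_eq_left hdpos.le, max_eq_right (by linarith : -(d:ℝ) ≤ (0:ℝ))]
      have heq : ((d:ℝ) - 0) / ((d:ℝ) - -(d:ℝ)) * (0 - -(d:ℝ)) + 0 = (d:ℝ) / 2 := by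
        field_simp
        ring
      rw [heq]
    · intro j; simp
    · rw [Finset.sum_const, Finset.card_univ, Fintype.card_fin, nsmul_eq_mul]
      ring
  exact le_csSup hbdd hmem

instance : IsProbabilityMeasure signMeasure := by
  constructor
  simp [signMeasure]
  rw [← two_mul]
  simp [ENNReal.mul_inv_cancel]

set_option maxHeartbeats 1000000 in
/-- Proposition 1: For a random matrix `W ∈ ℝ^{m×d}` with i.i.d.
uniform `{−1,+1}` entries, objective vector `c = 𝟏`, `x̄ = 0`, `ε = 1`, there is a
universal constant `γ` such that with probability at least `1 − exp(−(d+m))` the SDP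
value satisfies `f_SDP ≤ γ (m √d + d √m)`, while almost surely `f_LP ≥ m d / 2`. -/
theorem stmt6 :
    ∃ γ : ℝ, 0 < γ ∧
      ∀ (m d : ℕ), 0 < m → 0 < d →
      ∀ {Ω : Type} [MeasurableSpace Ω] (μ : Measure Ω) [IsProbabilityMeasure μ]
        (W : Ω → Fin m → Fin d → ℝ),
        Measure.map W μ =
          Measure.pi (fun _ : Fin m => Measure.pi fun _ : Fin d => signMeasure) →
        1 - Real.exp (-((d : ℝ) + m)) ≤
          (μ {ω | fSDP (Matrix.of (W ω)) ≤
            γ * (m * Real.sqrt d + d * Real.sqrt m)}).toReal ∧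
        (∀ᵐ ω ∂μ, (m * d : ℝ) / 2 ≤ fLP (Matrix.of (W ω))) := by
  
  classical
  refine ⟨6, by norm_num, ?_⟩
  intro m d hm hd Ω _ μ _ W hmap
  set c : ENNReal := ((2:ENNReal)⁻¹ ^ d) ^ m with hc
  have hrep : Measure.map W μ
      = c • ∑ g : Fin m → Fin d → Bool, Measure.dirac (matOf g) := by
    rw [hmap, pi_pi_sign]
  have haem : AEMeasurable W μ := by
    by_contra hna
    have h0 := Measure.map_of_not_aemeasurable (μ := μ) hna
    rw [hmap] at h0
    have h1 : (Measure.pi (fun _ : Fin m => Measure.pi fun _ : Fin d => signMeasure))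
        Set.univ = 1 := measure_univ
    rw [h0] at h1
    simp at h1
  have hmap_apply : ∀ S : Set (Fin m → Fin d → ℝ), MeasurableSet S →
      μ (W ⁻¹' S) = c * ∑ g : Fin m → Fin d → Bool, Measure.dirac (matOf g) S := by
    intro S hS
    rw [← Measure.map_apply_of_aemeasurable haem hS, hrep, Measure.smul_apply,
      Measure.finset_sum_apply, smul_eq_mul]
  have coord_sum : ∀ {n : ℕ} (u : EuclideanSpace ℝ (Fin n)), ‖u‖ = 1 → ∑ j, u j ^ 2 = 1 := by
    intro n u hu
    have h1 := (EuclideanSpace.norm_eq u).symm.trans hu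
    have h2 := congrArg (fun t : ℝ => t ^ 2) h1
    simp only [one_pow] at h2
    rw [Real.sq_sqrt (Finset.sum_nonneg fun i _ => sq_nonneg _)] at h2
    simpa [Real.norm_eq_abs, sq_abs] using h2
  constructor
  · -- SDP bound
    obtain ⟨N, hN1, hNcard, hNcov⟩ := net_exists d hd
    obtain ⟨M, hM1, hMcard, hMcov⟩ := net_exists m hm
    set s : ℝ := 3 * (Real.sqrt d + Real.sqrt m) with hs
    have hs0 : 0 ≤ s := by positivity
    set T : (Fin m → Fin d → Bool) →
        (EuclideanSpace ℝ (Fin d) →L[ℝ] EuclideanSpace ℝ (Fin m)) := fun g =>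
      LinearMap.toContinuousLinearMap (Matrix.toEuclideanLin (Matrix.of (matOf g))) with hT
    have hinner : ∀ (g : Fin m → Fin d → Bool) (u : EuclideanSpace ℝ (Fin d))
        (v : EuclideanSpace ℝ (Fin m)),
        (inner ℝ v (T g u) : ℝ) = ∑ i, ∑ j, (v i * u j) * sgn (g i j) := by
      intro g u v
      rw [PiLp.inner_apply]
      have hcoord : ∀ i, (T g u) i = ∑ j, sgn (g i j) * u j := by
        intro i
        rw [hT]
        simp only [LinearMap.coe_toContinuousLinearMap', Matrix.toEuclideanLin_apply]
        simp [Matrix.mulVec, dotProduct, matOf]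
      simp only [RCLike.inner_apply, conj_trivial, hcoord]
      rw [Finset.sum_congr rfl fun i _ => Finset.sum_mul _ _ _]
      exact Finset.sum_congr rfl fun i _ => Finset.sum_congr rfl fun j _ => by ring
    set Bad : Finset (Fin m → Fin d → Bool) := (N ×ˢ M).biUnion (fun p =>
      Finset.univ.filter (fun g => s ≤ ∑ i, ∑ j, (p.2 i * p.1 j) * sgn (g i j))) with hBad
    have hBadCard : (Bad.card : ℝ)
        ≤ 10 ^ (d + m) * (2 ^ (m * d) * Real.exp (-(s ^ 2) / 2)) := by
      have h1 : Bad.card ≤ ∑ p ∈ N ×ˢ M, (Finset.univ.filter (fun g : Fin m → Fin d → Bool =>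
          s ≤ ∑ i, ∑ j, (p.2 i * p.1 j) * sgn (g i j))).card := Finset.card_biUnion_le
      have h2 : ∀ p ∈ N ×ˢ M, ((Finset.univ.filter (fun g : Fin m → Fin d → Bool =>
          s ≤ ∑ i, ∑ j, (p.2 i * p.1 j) * sgn (g i j))).card : ℝ)
          ≤ 2 ^ (m * d) * Real.exp (-(s ^ 2) / 2) := by
        rintro ⟨u, v⟩ hp
        rw [Finset.mem_product] at hp
        refine chernoff_count _ ?_ hs0
        have hu : ∑ j, u j ^ 2 = 1 := coord_sum u (hN1 u hp.1)
        have hv : ∑ i, v i ^ 2 = 1 := coord_sum v (hM1 v hp.2)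
        have : ∑ i, ∑ j, (v i * u j) ^ 2 = (∑ i, v i ^ 2) * (∑ j, u j ^ 2) := by
          rw [Finset.sum_mul_sum]
          exact Finset.sum_congr rfl fun i _ => Finset.sum_congr rfl fun j _ => by ring
        rw [this, hu, hv, mul_one]
      calc (Bad.card : ℝ) ≤ ∑ p ∈ N ×ˢ M, ((Finset.univ.filter (fun g : Fin m → Fin d → Bool =>
            s ≤ ∑ i, ∑ j, (p.2 i * p.1 j) * sgn (g i j))).card : ℝ) := by
            exact_mod_cast h1
        _ ≤ ∑ _p ∈ N ×ˢ M, (2 ^ (m * d) * Real.exp (-(s ^ 2) / 2)) := Finset.sum_le_sum h2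
        _ = ((N ×ˢ M).card : ℝ) * (2 ^ (m * d) * Real.exp (-(s ^ 2) / 2)) := by
            rw [Finset.sum_const, nsmul_eq_mul]
        _ ≤ 10 ^ (d + m) * (2 ^ (m * d) * Real.exp (-(s ^ 2) / 2)) := by
            refine mul_le_mul_of_nonneg_right ?_ (by positivity)
            rw [Finset.card_product]
            calc ((N.card * M.card : ℕ) : ℝ) = (N.card : ℝ) * (M.card : ℝ) := by push_cast; ring
              _ ≤ 10 ^ d * 10 ^ m := by
                  refine mul_le_mul ?_ ?_ (by positivity) (by positivity)
                  · exact_mod_cast Nat.cast_le.2 hNcard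
                  · exact_mod_cast Nat.cast_le.2 hMcard
              _ = 10 ^ (d + m) := (pow_add _ _ _).symm
    set GoodF : Finset (Fin m → Fin d → Bool) := Finset.univ \ Bad with hGoodF
    set Sg : Finset (Fin m → Fin d → ℝ) := GoodF.image matOf with hSg
    have hSgmeas : MeasurableSet (↑Sg : Set (Fin m → Fin d → ℝ)) :=
      Sg.finite_toSet.measurableSet
    have hgoodSDP : ∀ g ∈ GoodF, fSDP (Matrix.of (matOf g))
        ≤ 6 * (m * Real.sqrt d + d * Real.sqrt m) := by
      intro g hg
      have hnotbad : g ∉ Bad := (Finset.mem_sdiff.1 hg).2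
      have hpairs : ∀ u ∈ N, ∀ v ∈ M, (inner ℝ v (T g u) : ℝ) ≤ s := by
        intro u hu v hv
        by_contra hcon
        push_neg at hcon
        refine hnotbad ?_
        rw [hBad]
        refine Finset.mem_biUnion.2 ⟨(u, v), Finset.mem_product.2 ⟨hu, hv⟩,
          Finset.mem_filter.2 ⟨Finset.mem_univ _, ?_⟩⟩
        rw [← hinner g u v]
        exact hcon.le
      have hop : ‖T g‖ ≤ 2 * s := opnorm_of_net (T g) s hs0 N M hN1 hNcov hM1 hMcov hpairs
      have hnb := mulVec_sq_bound (Matrix.of (matOf g)) (2 * s) (by positivity) hop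
      have hfinal := fSDP_le_of_normBound (Matrix.of (matOf g)) (2 * s) (by positivity) hnb
      refine hfinal.trans (le_of_eq ?_)
      have hdd : Real.sqrt d * Real.sqrt d = (d : ℝ) := Real.mul_self_sqrt (Nat.cast_nonneg d)
      have hmm : Real.sqrt m * Real.sqrt m = (m : ℝ) := Real.mul_self_sqrt (Nat.cast_nonneg m)
      rw [hs]
      linear_combination (6 * Real.sqrt m) * hdd + (6 * Real.sqrt d) * hmm
    have hsub : W ⁻¹' ↑Sg ⊆ {ω | fSDP (Matrix.of (W ω))
        ≤ 6 * (m * Real.sqrt d + d * Real.sqrt m)} := by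
      intro ω hω
      obtain ⟨g, hg, hEq⟩ := Finset.mem_image.1 hω
      simp only [Set.mem_setOf_eq]
      rw [show W ω = matOf g from hEq.symm]
      exact hgoodSDP g hg
    have hμSg : μ (W ⁻¹' ↑Sg) = c * GoodF.card := by
      rw [hmap_apply _ hSgmeas]
      congr 1
      have hdir : ∀ g : Fin m → Fin d → Bool,
          Measure.dirac (matOf g) (↑Sg : Set (Fin m → Fin d → ℝ))
          = if g ∈ GoodF then 1 else 0 := by
        intro g
        rw [Measure.dirac_apply, Set.indicator_apply]
        by_cases hg : g ∈ GoodF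
        · rw [if_pos hg, if_pos (Finset.mem_coe.2 (Finset.mem_image_of_mem matOf hg))]
          rfl
        · rw [if_neg hg, if_neg]
          intro hcon
          obtain ⟨g', hg', hEq⟩ := Finset.mem_image.1 (Finset.mem_coe.1 hcon)
          exact hg (matOf_injective hEq ▸ hg')
      simp_rw [hdir]
      rw [Finset.sum_ite_mem, Finset.univ_inter, Finset.sum_const, nsmul_eq_mul, mul_one]
    -- numeric bound
    have hcardGood : ((2:ℕ) ^ d) ^ m = GoodF.card + Bad.card := by
      rw [hGoodF, Finset.card_sdiff_of_subset (Finset.subset_univ Bad), Finset.card_univ]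
      rw [Nat.sub_add_cancel]
      · simp [Fintype.card_fun]
      · calc Bad.card ≤ Finset.univ.card := Finset.card_le_card (Finset.subset_univ _)
          _ = _ := by simp [Fintype.card_fun]
    have hexpineq : 10 ^ (d + m) * Real.exp (-(s ^ 2) / 2) ≤ Real.exp (-((d:ℝ) + m)) := by
      have hsq : 9 * ((d:ℝ) + m) ≤ s ^ 2 := by
        have h1 : Real.sqrt d ^ 2 = (d:ℝ) := Real.sq_sqrt (Nat.cast_nonneg d)
        have h2 : Real.sqrt m ^ 2 = (m:ℝ) := Real.sq_sqrt (Nat.cast_nonneg m)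
        have h3 : 0 ≤ Real.sqrt d * Real.sqrt m := by positivity
        rw [hs]
        nlinarith
      have hstep1 : Real.exp (-(s ^ 2) / 2) ≤ Real.exp (-(9 * ((d:ℝ) + m)) / 2) := by
        rw [Real.exp_le_exp]
        linarith
      have hten : (10:ℝ) ≤ Real.exp (7 / 2) := by
        have h1 : Real.exp (7 / 6) ^ (3:ℕ) = Real.exp (7 / 2) := by
          rw [← Real.exp_nat_mul]
          norm_num
        have h2 : (13/6 : ℝ) ≤ Real.exp (7 / 6) := by
          have := Real.add_one_le_exp (7/6 : ℝ)
          linarith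
        have h3 : ((13:ℝ)/6) ^ (3:ℕ) ≤ Real.exp (7 / 6) ^ (3:ℕ) :=
          pow_le_pow_left₀ (by norm_num) h2 3
        rw [h1] at h3
        refine le_trans ?_ h3
        norm_num
      have hpow : (10:ℝ) ^ (d + m) ≤ Real.exp ((7 / 2) * ((d:ℝ) + m)) := by
        have : Real.exp ((7 / 2) * ((d:ℝ) + m)) = Real.exp (7 / 2) ^ (d + m) := by
          rw [← Real.exp_nat_mul]
          push_cast
          ring_nf
        rw [this]
        exact pow_le_pow_left₀ (by norm_num) hten (d + m)
      calc 10 ^ (d + m) * Real.exp (-(s ^ 2) / 2)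
          ≤ Real.exp ((7 / 2) * ((d:ℝ) + m)) * Real.exp (-(9 * ((d:ℝ) + m)) / 2) :=
            mul_le_mul hpow hstep1 (Real.exp_pos _).le (Real.exp_pos _).le
        _ = Real.exp ((7 / 2) * ((d:ℝ) + m) + -(9 * ((d:ℝ) + m)) / 2) := (Real.exp_add _ _).symm
        _ = Real.exp (-((d:ℝ) + m)) := by ring_nf
    have htoReal : (μ (W ⁻¹' ↑Sg)).toReal = ((2:ℝ)⁻¹ ^ d) ^ m * GoodF.card := by
      rw [hμSg, ENNReal.toReal_mul, hc]
      simp [ENNReal.toReal_pow, ENNReal.toReal_inv]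
    have hmain : 1 - Real.exp (-((d:ℝ) + m)) ≤ (μ (W ⁻¹' ↑Sg)).toReal := by
      rw [htoReal]
      have hpow2 : ((2:ℝ) ^ d) ^ m = (((2:ℕ) ^ d) ^ m : ℕ) := by push_cast; ring
      have hpos : (0:ℝ) < ((2:ℝ) ^ d) ^ m := by positivity
      have hcard' : ((2:ℝ) ^ d) ^ m = (GoodF.card : ℝ) + (Bad.card : ℝ) := by
        rw [hpow2, hcardGood]; push_cast; ring
      have h2md : ((2:ℝ) ^ (m * d)) = ((2:ℝ) ^ d) ^ m := by
        rw [← pow_mul, mul_comm]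
      have hBad' : (Bad.card : ℝ) ≤ ((2:ℝ) ^ d) ^ m * Real.exp (-((d:ℝ) + m)) := by
        calc (Bad.card : ℝ) ≤ 10 ^ (d + m) * (2 ^ (m * d) * Real.exp (-(s ^ 2) / 2)) := hBadCard
          _ = 2 ^ (m * d) * (10 ^ (d + m) * Real.exp (-(s ^ 2) / 2)) := by ring
          _ ≤ 2 ^ (m * d) * Real.exp (-((d:ℝ) + m)) := by
              refine mul_le_mul_of_nonneg_left hexpineq (by positivity)
          _ = ((2:ℝ) ^ d) ^ m * Real.exp (-((d:ℝ) + m)) := by rw [h2md]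
      have hinv : ((2:ℝ)⁻¹ ^ d) ^ m = (((2:ℝ) ^ d) ^ m)⁻¹ := by
        rw [← inv_pow, ← inv_pow]
      rw [hinv]
      have hGoodF' : ((2:ℝ) ^ d) ^ m * (1 - Real.exp (-((d:ℝ) + m))) ≤ (GoodF.card : ℝ) := by
        nlinarith
      calc 1 - Real.exp (-((d:ℝ) + m))
          = (((2:ℝ) ^ d) ^ m)⁻¹ * (((2:ℝ) ^ d) ^ m * (1 - Real.exp (-((d:ℝ) + m)))) := by
            field_simp
        _ ≤ (((2:ℝ) ^ d) ^ m)⁻¹ * (GoodF.card : ℝ) := by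
            refine mul_le_mul_of_nonneg_left hGoodF' (by positivity)
    refine hmain.trans ?_
    exact ENNReal.toReal_mono (measure_ne_top μ _) (measure_mono hsub)
  · -- LP bound
    rw [ae_iff]
    set Sall : Finset (Fin m → Fin d → ℝ) := Finset.image matOf Finset.univ with hSall
    have hSmeas : MeasurableSet (↑Sall : Set (Fin m → Fin d → ℝ)) :=
      Sall.finite_toSet.measurableSet
    have hzero : μ (W ⁻¹' (↑Sall)ᶜ) = 0 := by
      rw [hmap_apply _ hSmeas.compl]
      have hdir : ∀ g : Fin m → Fin d → Bool,
          Measure.dirac (matOf g) ((↑Sall : Set (Fin m → Fin d → ℝ))ᶜ) = 0 := by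
        intro g
        rw [Measure.dirac_apply, Set.indicator_apply, if_neg]
        intro hcon
        exact hcon (Finset.mem_coe.2 (Finset.mem_image_of_mem matOf (Finset.mem_univ g)))
      simp [hdir]
    refine measure_mono_null ?_ hzero
    intro ω hω
    simp only [Set.mem_setOf_eq, not_le] at hω
    simp only [Set.mem_preimage, Set.mem_compl_iff]
    intro hmem
    obtain ⟨g, _, hEq⟩ := Finset.mem_image.1 (Finset.mem_coe.1 hmem)
    have hlp := fLP_ge_of_sign hd (Matrix.of (matOf g)) (fun i j => by
      by_cases hb : g i j
      · left; simp [Matrix.of_apply, matOf, sgn, hb]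
      · right; simp [Matrix.of_apply, matOf, sgn, hb])
    rw [show W ω = matOf g from hEq.symm] at hω
    linarith
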